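/- Let x ≤ y in S_n and x', y' ∈ S_{n+t} be defined by equation (2.1) with parameters k, t. Then Φ = {t+1, ..., t+n} is an interval pattern embedding of [x,y] into [x',y']: Φ is a common pattern embedding of x into x' and y into y', x' and y' agree outside Φ, and ℓ(y') - ℓ(x') = ℓ(y) - ℓ(x), hence [x,y] ≅ [x',y'] as posets. -/

import Mathlib

/-- Column insertion of a value into a tableau represented as a list of columns
(each column a strictly increasing list, read top to bottom). The value bumps the
smallest entry of the first column larger than it (or is appended at the bottom),
and any bumped entry is inserted into the next column. -/
def insertCol : ℕ → List (List ℕ) → List (List ℕ)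
  | v, [] => [[v]]
  | v, c :: cs =>
    match c.find? (fun x => v < x) with
    | none => (c ++ [v]) :: cs
    | some x => (c.map fun y => if y = x then v else y) :: insertCol x cs

/-- Place the entry `i` at the bottom of the `j`-th column (0-based). -/
def placeAt (i : ℕ) : ℕ → List (List ℕ) → List (List ℕ)
  | 0, [] => [[i]]
  | 0, c :: cs => (c ++ [i]) :: cs
  | _ + 1, [] => [[i]]
  | j + 1, c :: cs => c :: placeAt i j cs

/-- The shape of a tableau: the list of its column lengths. -/
def shapeOf (T : List (List ℕ)) : List ℕ := T.map List.length

/-- Index of the first position where two lists differ. -/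
def diffIdx : List ℕ → List ℕ → ℕ
  | a :: as, b :: bs => if a = b then diffIdx as bs + 1 else 0
  | _, _ => 0

/-- The Robinson–Schensted pair `(P, Q)` of a word `w = [w 1, …, w n]` (one-line
notation): `P` is obtained by column inserting `w n, w (n-1), …, w 1` into the empty
tableau, and `Q` records, with entry `i`, the box added at the `i`-th insertion step. -/
def RSpair (w : List ℕ) : List (List ℕ) × List (List ℕ) :=
  (w.reverse.zipIdx.map Prod.swap).foldl (fun PQ p =>
    let P' := insertCol p.2 PQ.1
    (P', placeAt (p.1 + 1) (diffIdx (shapeOf PQ.1) (shapeOf P')) PQ.2)) ([], [])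

/-- The Robinson–Schensted `P`-symbol (insertion tableau) of a word. -/
def Psymb (w : List ℕ) : List (List ℕ) := (RSpair w).1

/-- The Robinson–Schensted `Q`-symbol (recording tableau) of a word. -/
def Qsymb (w : List ℕ) : List (List ℕ) := (RSpair w).2

/-- One-line notation (1-based values) of a permutation of `Fin n`. -/
def oneLine {n : ℕ} (w : Equiv.Perm (Fin n)) : List ℕ := List.ofFn fun i => (w i : ℕ) + 1

/-- The `P`-symbol of a permutation. Two permutations of `S_n` lie in the same right
Kazhdan–Lusztig cell iff their `P`-symbols coincide. -/
def RSP {n : ℕ} (w : Equiv.Perm (Fin n)) : List (List ℕ) := Psymb (oneLine w)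

/-- The `Q`-symbol of a permutation. Two permutations of `S_n` lie in the same left
Kazhdan–Lusztig cell iff their `Q`-symbols coincide. -/
def RSQ {n : ℕ} (w : Equiv.Perm (Fin n)) : List (List ℕ) := Qsymb (oneLine w)

/-- A list of columns is a standard tableau: columns are nonempty and strictly
increasing, column lengths weakly decrease, and rows strictly increase. -/
def ColsStandard (T : List (List ℕ)) : Prop :=
  (∀ c ∈ T, c ≠ [] ∧ c.Pairwise (· < ·)) ∧
  T.Chain' (fun c c' => c'.length ≤ c.length ∧ ∀ i < c'.length, c.getD i 0 < c'.getD i 0)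

/-- A standard Young tableau with `n` boxes: standard, with entries exactly `1, …, n`. -/
def IsSYT (n : ℕ) (T : List (List ℕ)) : Prop :=
  ColsStandard T ∧ T.flatten.Perm (List.range' 1 n)

/-- The (1-based) index of the column of `T` containing the entry `s`. -/
def colIndex (T : List (List ℕ)) (s : ℕ) : ℕ := T.findIdx (fun c => c.contains s) + 1

/-- The number of inversions `ℓ(f) = #{(i,j) : i < j, f i > f j}`. -/
def invNum {N : ℕ} (f : Fin N → ℕ) : ℕ :=
  (Finset.univ.filter fun p : Fin N × Fin N => p.1 < p.2 ∧ f p.2 < f p.1).card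

/-- Ehresmann's tableau (rank-matrix) characterisation of the Bruhat order, stated for
arbitrary functions: `f ≤ g` iff `#{i ≤ p : f i ≥ q} ≤ #{i ≤ p : g i ≥ q}` for all `p, q`. -/
def rankLE {N : ℕ} (f g : Fin N → ℕ) : Prop :=
  ∀ p q : ℕ,
    (Finset.univ.filter fun i : Fin N => (i : ℕ) ≤ p ∧ q ≤ f i).card ≤
      (Finset.univ.filter fun i : Fin N => (i : ℕ) ≤ p ∧ q ≤ g i).card

/-- The Bruhat order on the symmetric group `S_N`. -/
def bruhatLE {N : ℕ} (x y : Equiv.Perm (Fin N)) : Prop :=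
  rankLE (fun i => (x i : ℕ)) (fun i => (y i : ℕ))

/-- Equation (2.1) of Lanini–McNamara, in 0-based terms: given `x : Fin n → ℕ`
(0-based one-line values), produce the one-line values of `x' ∈ S_{n+t}`:
`x' i = k + i` for `i < t`; for `i ≥ t`, `x' i = x (i - t)` if `x (i - t) < k`
and `x' i = x (i - t) + t` otherwise. -/
def primeMap (n t k : ℕ) (x : Fin n → ℕ) : Fin (n + t) → ℕ := fun i =>
  if _h : (i : ℕ) < t then k + i
  else
    have hi : (i : ℕ) - t < n := by omega
    if x ⟨(i : ℕ) - t, hi⟩ < k then x ⟨(i : ℕ) - t, hi⟩ else x ⟨(i : ℕ) - t, hi⟩ + t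

open Finset

def eM (t k v : ℕ) : ℕ := if v < k then v else v + t

lemma eM_lt_iff {t k v w : ℕ} : eM t k v < eM t k w ↔ v < w := by
  unfold eM; split <;> split <;> omega

def qT (t k q : ℕ) : ℕ := if q ≤ k then q else if q ≤ k + t then k else q - t

lemma le_eM_iff {t k v q : ℕ} : q ≤ eM t k v ↔ qT t k q ≤ v := by
  unfold eM qT; split_ifs <;> omega

lemma qT_lift {t k q : ℕ} : qT t k (if q ≤ k then q else q + t) = q := by
  unfold qT; split_ifs <;> omega

def cnt (N : ℕ) (f : ℕ → ℕ) (p q : ℕ) : ℕ :=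
  ∑ i ∈ Finset.range N, if i ≤ p ∧ q ≤ f i then 1 else 0

def pad (N : ℕ) (f : Fin N → ℕ) : ℕ → ℕ := fun i => if h : i < N then f ⟨i, h⟩ else 0

lemma pad_lt {N : ℕ} (f : Fin N → ℕ) {i : ℕ} (h : i < N) : pad N f i = f ⟨i, h⟩ := dif_pos h

lemma cnt_congr {N : ℕ} {f g : ℕ → ℕ} (h : ∀ i < N, f i = g i) (p q : ℕ) :
    cnt N f p q = cnt N g p q := by
  unfold cnt
  exact Finset.sum_congr rfl fun i hi => by rw [h i (Finset.mem_range.1 hi)]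

lemma filterCard_eq_cnt {N : ℕ} (f : Fin N → ℕ) (p q : ℕ) :
    (Finset.univ.filter fun i : Fin N => (i : ℕ) ≤ p ∧ q ≤ f i).card = cnt N (pad N f) p q := by
  rw [Finset.card_filter]
  unfold cnt
  rw [← Fin.sum_univ_eq_sum_range (fun i => if i ≤ p ∧ q ≤ pad N f i then 1 else 0) N]
  exact Finset.sum_congr rfl fun i _ => by rw [pad_lt f i.isLt]

lemma rankLE_iff_cnt {N : ℕ} (f g : Fin N → ℕ) :
    rankLE f g ↔ ∀ p q, cnt N (pad N f) p q ≤ cnt N (pad N g) p q := by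
  unfold rankLE
  constructor <;> intro h p q <;>
    [rw [← filterCard_eq_cnt, ← filterCard_eq_cnt]; rw [filterCard_eq_cnt, filterCard_eq_cnt]] <;>
    exact h p q

def FF (n t k : ℕ) (f : ℕ → ℕ) : ℕ → ℕ := fun i =>
  if i < t then k + i else eM t k (f (i - t))

lemma pad_prime {n : ℕ} (t k : ℕ) (g : Fin n → ℕ) :
    ∀ i < n + t, pad (n + t) (primeMap n t k g) i = FF n t k (pad n g) i := by
  intro i hi
  rw [pad_lt _ hi]
  unfold primeMap FF eM
  by_cases h : i < t
  · simp [h]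
  · rw [dif_neg h, if_neg h, pad_lt g (by omega : i - t < n)]

lemma cnt_FF (n t k : ℕ) (f : ℕ → ℕ) (p q : ℕ) :
    cnt (n + t) (FF n t k f) p q =
      (∑ i ∈ Finset.range t, if i ≤ p ∧ q ≤ k + i then 1 else 0) +
        (if t ≤ p then cnt n f (p - t) (qT t k q) else 0) := by
  unfold cnt
  have hsplit : ∑ i ∈ Finset.range (n + t), (if i ≤ p ∧ q ≤ FF n t k f i then 1 else 0) =
      (∑ i ∈ Finset.Ico 0 t, if i ≤ p ∧ q ≤ FF n t k f i then 1 else 0) +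
        ∑ i ∈ Finset.Ico t (t + n), if i ≤ p ∧ q ≤ FF n t k f i then 1 else 0 := by
    rw [Finset.sum_Ico_consecutive _ (Nat.zero_le t) (Nat.le_add_right t n)]
    rw [show n + t = t + n from Nat.add_comm n t, Finset.range_eq_Ico]
  rw [hsplit, ← Finset.range_eq_Ico]
  congr 1
  · exact Finset.sum_congr rfl fun i hi => by
      have : i < t := Finset.mem_range.1 hi
      unfold FF
      rw [if_pos this]
  · rw [Finset.sum_Ico_eq_sum_range]
    simp only [Nat.add_sub_cancel_left]
    by_cases hp : t ≤ p
    · rw [if_pos hp]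
      exact Finset.sum_congr rfl fun j hj => by
        unfold FF
        rw [if_neg (show ¬ (t + j < t) by omega)]
        simp only [Nat.add_sub_cancel_left]
        have hiff : (t + j ≤ p ∧ q ≤ eM t k (f j)) ↔ (j ≤ p - t ∧ qT t k q ≤ f j) := by
          rw [le_eM_iff]; constructor <;> intro ⟨h1, h2⟩ <;> exact ⟨by omega, h2⟩
        simp only [hiff]
    · rw [if_neg hp]
      exact Finset.sum_eq_zero fun j _ => by
        exact if_neg (by rintro ⟨h1, -⟩; omega)

lemma cnt_FF_mono {n t k : ℕ} {f g : ℕ → ℕ}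
    (H : ∀ p q, cnt n f p q ≤ cnt n g p q) :
    ∀ p q, cnt (n + t) (FF n t k f) p q ≤ cnt (n + t) (FF n t k g) p q := by
  intro p q
  rw [cnt_FF, cnt_FF]
  gcongr
  split
  · exact H _ _
  · exact le_rfl

lemma cnt_FF_unmono {n t k : ℕ} {f g : ℕ → ℕ}
    (H : ∀ p q, cnt (n + t) (FF n t k f) p q ≤ cnt (n + t) (FF n t k g) p q) :
    ∀ p q, cnt n f p q ≤ cnt n g p q := by
  intro p q
  have := H (p + t) (if q ≤ k then q else q + t)
  rw [cnt_FF, cnt_FF, if_pos (by omega : t ≤ p + t)] at this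
  rw [qT_lift] at this
  simpa using this
lemma primeMap_lt_t {n t k : ℕ} (g : Fin n → ℕ) (i : Fin (n + t)) (h : (i : ℕ) < t) :
    primeMap n t k g i = k + i := by
  unfold primeMap; rw [dif_pos h]

lemma primeMap_ge_t {n t k : ℕ} (g : Fin n → ℕ) (i : Fin (n + t)) (h : ¬ (i : ℕ) < t)
    (hi : (i : ℕ) - t < n) :
    primeMap n t k g i = eM t k (g ⟨(i : ℕ) - t, hi⟩) := by
  unfold primeMap eM; rw [dif_neg h]

lemma primeMap_shift {n t k : ℕ} (g : Fin n → ℕ) (a : Fin n) (h : t + (a : ℕ) < n + t) :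
    primeMap n t k g ⟨t + a, h⟩ = eM t k (g a) := by
  rw [primeMap_ge_t g _ (by simp) (by simp [a.isLt])]
  congr 1
  · exact congrArg g (Fin.ext (by simp))

lemma eM_inj {t k v w : ℕ} (h : eM t k v = eM t k w) : v = w := by
  unfold eM at h; split_ifs at h <;> omega

lemma eM_not_band {t k v : ℕ} : eM t k v < k ∨ k + t ≤ eM t k v := by
  unfold eM; split <;> omega

lemma primeMap_bound {n t k : ℕ} (hk : k ≤ n) (g : Fin n → ℕ) (hg : ∀ a, g a < n)
    (i : Fin (n + t)) : primeMap n t k g i < n + t := by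
  rcases Nat.lt_or_ge (i : ℕ) t with h | h
  · rw [primeMap_lt_t g i h]
    omega
  · rw [primeMap_ge_t g i (by omega) (by omega)]
    have := hg ⟨(i : ℕ) - t, by omega⟩
    unfold eM
    split <;> omega

lemma primeMap_injective {n t k : ℕ} (g : Fin n → ℕ) (hg : Function.Injective g)
    (i j : Fin (n + t)) (h : primeMap n t k g i = primeMap n t k g j) : i = j := by
  by_cases hi : (i : ℕ) < t <;> by_cases hj : (j : ℕ) < t
  · rw [primeMap_lt_t g i hi, primeMap_lt_t g j hj] at h
    exact Fin.ext (by omega)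
  · rw [primeMap_lt_t g i hi, primeMap_ge_t g j hj (by omega)] at h
    rcases eM_not_band (t := t) (k := k) (v := g ⟨(j : ℕ) - t, by omega⟩) with hb | hb <;> omega
  · rw [primeMap_ge_t g i hi (by omega), primeMap_lt_t g j hj] at h
    rcases eM_not_band (t := t) (k := k) (v := g ⟨(i : ℕ) - t, by omega⟩) with hb | hb <;> omega
  · rw [primeMap_ge_t g i hi (by omega), primeMap_ge_t g j hj (by omega)] at h
    have h2 : (⟨(i : ℕ) - t, by omega⟩ : Fin n) = ⟨(j : ℕ) - t, by omega⟩ := hg (eM_inj h)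
    have h3 : (i : ℕ) - t = (j : ℕ) - t := congrArg Fin.val h2
    exact Fin.ext (by omega)

noncomputable def primePerm (n t k : ℕ) (hk : k ≤ n) (z : Equiv.Perm (Fin n)) : Equiv.Perm (Fin (n + t)) :=
  Equiv.ofBijective
    (fun i => ⟨primeMap n t k (fun a => (z a : ℕ)) i,
      primeMap_bound hk _ (fun a => (z a).isLt) i⟩)
    (Finite.injective_iff_bijective.1 (fun i j h =>
      primeMap_injective _ (fun a b hab => z.injective (Fin.ext hab)) i j
        (congrArg Fin.val h)))

lemma primePerm_apply {n t k : ℕ} (hk : k ≤ n) (z : Equiv.Perm (Fin n)) (i : Fin (n + t)) :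
    ((primePerm n t k hk z) i : ℕ) = primeMap n t k (fun a => (z a : ℕ)) i := rfl

lemma bruhat_transfer {n t k : ℕ} (hk : k ≤ n) (a b : Equiv.Perm (Fin n)) :
    bruhatLE a b ↔ bruhatLE (primePerm n t k hk a) (primePerm n t k hk b) := by
  rw [bruhatLE, bruhatLE, rankLE_iff_cnt, rankLE_iff_cnt]
  have ca : ∀ p q, cnt (n + t) (pad (n + t) fun i => ((primePerm n t k hk a) i : ℕ)) p q
      = cnt (n + t) (FF n t k (pad n fun i => (a i : ℕ))) p q := by
    intro p q
    refine cnt_congr (fun i hi => ?_) p q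
    rw [show (fun i => ((primePerm n t k hk a) i : ℕ)) = primeMap n t k (fun i => (a i : ℕ))
      from funext (primePerm_apply hk a)]
    exact pad_prime t k _ i hi
  have cb : ∀ p q, cnt (n + t) (pad (n + t) fun i => ((primePerm n t k hk b) i : ℕ)) p q
      = cnt (n + t) (FF n t k (pad n fun i => (b i : ℕ))) p q := by
    intro p q
    refine cnt_congr (fun i hi => ?_) p q
    rw [show (fun i => ((primePerm n t k hk b) i : ℕ)) = primeMap n t k (fun i => (b i : ℕ))
      from funext (primePerm_apply hk b)]
    exact pad_prime t k _ i hi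
  constructor
  · intro H p q
    rw [ca, cb]
    exact cnt_FF_mono H p q
  · intro H
    apply cnt_FF_unmono (t := t) (k := k)
    intro p q
    rw [← ca, ← cb]
    exact H p q
lemma cnt_small (N : ℕ) (f : ℕ → ℕ) (p q : ℕ) (hp : p < N) :
    cnt N f p q = ∑ j ∈ Finset.range (p + 1), if q ≤ f j then 1 else 0 := by
  unfold cnt
  rw [← Finset.sum_subset (Finset.range_subset_range.2 (show p + 1 ≤ N by omega))
      (fun j _ hj => if_neg (by
        rintro ⟨h1, -⟩
        exact hj (Finset.mem_range.2 (by omega))))]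
  exact Finset.sum_congr rfl fun j hj => by
    have : j ≤ p := by have := Finset.mem_range.1 hj; omega
    simp [this]

lemma squeeze_band {n t k : ℕ} (w : Fin (n + t) → ℕ)
    (hw : ∀ p q, p < t →
      cnt (n + t) (pad (n + t) w) p q = ∑ i ∈ Finset.range t, if i ≤ p ∧ q ≤ k + i then 1 else 0) :
    ∀ i, ∀ _ : i < t, pad (n + t) w i = k + i := by
  intro i
  induction i using Nat.strong_induction_on with
  | _ i IH =>
  intro h
  have h1 := hw i (k + i) h
  have h2 := hw i (k + i + 1) h
  rw [cnt_small _ _ _ _ (by omega)] at h1 h2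
  have e1 : (∑ j ∈ Finset.range t, if j ≤ i ∧ k + i ≤ k + j then 1 else 0) = 1 := by
    have hiff : ∀ j, (j ≤ i ∧ k + i ≤ k + j) ↔ j = i := by intro j; omega
    simp only [hiff]
    simp [Finset.sum_ite_eq', h]
  have e2 : (∑ j ∈ Finset.range t, if j ≤ i ∧ k + i + 1 ≤ k + j then 1 else 0) = 0 := by
    exact Finset.sum_eq_zero fun j hj => if_neg (by omega)
  rw [Finset.sum_range_succ] at h1 h2
  have e3 : (∑ j ∈ Finset.range i, if k + i ≤ pad (n + t) w j then 1 else 0) = 0 := by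
    refine Finset.sum_eq_zero fun j hj => ?_
    have hji : j < i := Finset.mem_range.1 hj
    rw [IH j hji (by omega)]
    exact if_neg (by omega)
  have e4 : (∑ j ∈ Finset.range i, if k + i + 1 ≤ pad (n + t) w j then 1 else 0) = 0 := by
    refine Finset.sum_eq_zero fun j hj => ?_
    have hji : j < i := Finset.mem_range.1 hj
    rw [IH j hji (by omega)]
    exact if_neg (by omega)
  rw [e3, e1] at h1
  rw [e4, e2] at h2
  by_cases hge : k + i ≤ pad (n + t) w i
  · by_cases hgt : k + i + 1 ≤ pad (n + t) w i
    · rw [if_pos hgt] at h2; omega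
    · omega
  · rw [if_neg hge] at h1; omega

lemma exists_preimage {n t k : ℕ} (hk : k ≤ n) (x y : Equiv.Perm (Fin n))
    (w : Equiv.Perm (Fin (n + t)))
    (hxw : bruhatLE (primePerm n t k hk x) w) (hwy : bruhatLE w (primePerm n t k hk y)) :
    ∃ z : Equiv.Perm (Fin n), primePerm n t k hk z = w ∧ bruhatLE x z ∧ bruhatLE z y := by
  have key : ∀ (a : Equiv.Perm (Fin n)) p q,
      cnt (n + t) (pad (n + t) fun i => ((primePerm n t k hk a) i : ℕ)) p q
        = cnt (n + t) (FF n t k (pad n fun i => (a i : ℕ))) p q := by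
    intro a p q
    refine cnt_congr (fun i hi => ?_) p q
    rw [show (fun i => ((primePerm n t k hk a) i : ℕ)) = primeMap n t k (fun i => (a i : ℕ))
      from funext (primePerm_apply hk a)]
    exact pad_prime t k _ i hi
  rw [bruhatLE, rankLE_iff_cnt] at hxw hwy
  have hband : ∀ p q, p < t →
      cnt (n + t) (pad (n + t) fun i => ((w i : ℕ))) p q
        = ∑ i ∈ Finset.range t, if i ≤ p ∧ q ≤ k + i then 1 else 0 := by
    intro p q hp
    have h1 := hxw p q
    have h2 := hwy p q
    rw [key, cnt_FF, if_neg (by omega)] at h1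
    rw [key, cnt_FF, if_neg (by omega)] at h2
    omega
  have hval : ∀ i, ∀ h : i < t, (w ⟨i, by omega⟩ : ℕ) = k + i := by
    intro i h
    have := squeeze_band (fun i => ((w i : ℕ))) hband i h
    rwa [pad_lt _ (by omega : i < n + t)] at this
  have havoid : ∀ i : Fin (n + t), t ≤ (i : ℕ) → (w i : ℕ) < k ∨ k + t ≤ (w i : ℕ) := by
    intro i hi
    by_contra hcon
    push_neg at hcon
    obtain ⟨h1, h2⟩ := hcon
    set j := (w i : ℕ) - k with hj
    have hjt : j < t := by omega
    have hwj : w ⟨j, by omega⟩ = w i := Fin.ext (by rw [hval j hjt]; omega)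
    have := w.injective hwj
    have : j = (i : ℕ) := congrArg Fin.val this
    omega
  have hbnd : ∀ a : Fin n,
      (if (w ⟨t + (a : ℕ), by omega⟩ : ℕ) < k then (w ⟨t + (a : ℕ), by omega⟩ : ℕ)
        else (w ⟨t + (a : ℕ), by omega⟩ : ℕ) - t) < n := by
    intro a
    have := havoid ⟨t + (a : ℕ), by omega⟩ (by simp)
    have h2 := (w ⟨t + (a : ℕ), by omega⟩).isLt
    split <;> omega
  set zf : Fin n → Fin n := fun a => ⟨_, hbnd a⟩ with hzf
  have hzfval : ∀ a : Fin n, (zf a : ℕ) =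
      (if (w ⟨t + (a : ℕ), by omega⟩ : ℕ) < k then (w ⟨t + (a : ℕ), by omega⟩ : ℕ)
        else (w ⟨t + (a : ℕ), by omega⟩ : ℕ) - t) := fun a => rfl
  have hzfinj : Function.Injective zf := by
    intro a b hab
    have hab' : (zf a : ℕ) = (zf b : ℕ) := congrArg Fin.val hab
    rw [hzfval a, hzfval b] at hab'
    have ha := havoid ⟨t + (a : ℕ), by omega⟩ (by simp)
    have hb := havoid ⟨t + (b : ℕ), by omega⟩ (by simp)
    have : (w ⟨t + (a : ℕ), by omega⟩ : ℕ) = (w ⟨t + (b : ℕ), by omega⟩ : ℕ) := by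
      split_ifs at hab' <;> omega
    have h5 := w.injective (Fin.ext this)
    have h6 : t + (a : ℕ) = t + (b : ℕ) := congrArg Fin.val h5
    exact Fin.ext (by omega)
  set z : Equiv.Perm (Fin n) := Equiv.ofBijective zf (Finite.injective_iff_bijective.1 hzfinj)
    with hzdef
  have hzw : ∀ i, primeMap n t k (fun a => (z a : ℕ)) i = (w i : ℕ) := by
    intro i
    rcases Nat.lt_or_ge (i : ℕ) t with h | h
    · rw [primeMap_lt_t _ i h]
      have := hval (i : ℕ) h
      rw [show (⟨(i : ℕ), by omega⟩ : Fin (n + t)) = i from Fin.ext rfl] at this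
      omega
    · rw [primeMap_ge_t _ i (by omega) (by omega)]
      have hz1 : (z ⟨(i : ℕ) - t, by omega⟩ : ℕ) = (zf ⟨(i : ℕ) - t, by omega⟩ : ℕ) := rfl
      rw [hz1, hzfval]
      have hti : t + ((i : ℕ) - t) = (i : ℕ) := by omega
      simp only [hti, Fin.eta]
      have := havoid i (by omega)
      unfold eM
      rcases this with h5 | h5
      · rw [if_pos h5, if_pos h5]
      · rw [if_neg (show ¬ (w i : ℕ) < k by omega)]
        rw [if_neg (show ¬ (w i : ℕ) - t < k by omega)]
        omega
  have hz : primePerm n t k hk z = w :=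
    Equiv.ext fun i => Fin.ext (by rw [primePerm_apply, hzw])
  refine ⟨z, hz, ?_, ?_⟩
  · rw [bruhat_transfer hk (t := t) x z, hz]
    rwa [bruhatLE, rankLE_iff_cnt]
  · rw [bruhat_transfer hk (t := t) z y, hz]
    rwa [bruhatLE, rankLE_iff_cnt]
lemma invNum_eq {N : ℕ} (f : Fin N → ℕ) :
    invNum f = ∑ i ∈ Finset.range N, ∑ j ∈ Finset.range N,
      if i < j ∧ pad N f j < pad N f i then 1 else 0 := by
  unfold invNum
  rw [Finset.card_filter, Fintype.sum_prod_type]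
  rw [← Fin.sum_univ_eq_sum_range
    (fun a => ∑ j ∈ Finset.range N, if a < j ∧ pad N f j < pad N f a then 1 else 0) N]
  refine Finset.sum_congr rfl fun i _ => ?_
  rw [← Fin.sum_univ_eq_sum_range
    (fun b => if (i : ℕ) < b ∧ pad N f b < pad N f (i : ℕ) then 1 else 0) N]
  refine Finset.sum_congr rfl fun j _ => ?_
  rw [pad_lt f j.isLt, pad_lt f i.isLt, Fin.eta, Fin.eta]
  simp only [Fin.lt_def]

lemma count_lt_k {n k : ℕ} (hk : k ≤ n) (g : Equiv.Perm (Fin n)) :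
    (∑ b ∈ Finset.range n, if pad n (fun a => (g a : ℕ)) b < k then 1 else 0) = k := by
  rw [← Fin.sum_univ_eq_sum_range
    (fun b => if pad n (fun a => ((g a : ℕ))) b < k then 1 else 0) n]
  have step : ∀ b : Fin n,
      (if pad n (fun a => ((g a : ℕ))) (b : ℕ) < k then (1 : ℕ) else 0)
        = if ((g b : ℕ)) < k then 1 else 0 := fun b => by
    rw [pad_lt _ b.isLt]
  rw [Finset.sum_congr rfl fun b _ => step b]
  rw [Equiv.sum_comp g (fun v : Fin n => if (v : ℕ) < k then (1 : ℕ) else 0)]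
  rw [Fin.sum_univ_eq_sum_range (fun v => if v < k then (1 : ℕ) else 0) n]
  rw [← Finset.sum_subset (Finset.range_subset_range.2 hk)
    (fun v _ hv => if_neg (by simp only [Finset.mem_range] at hv ⊢; omega))]
  have : ∀ v ∈ Finset.range k, (if v < k then (1 : ℕ) else 0) = 1 := fun v hv =>
    if_pos (Finset.mem_range.1 hv)
  rw [Finset.sum_congr rfl this]
  simp

lemma sum_split {n t : ℕ} (h : ℕ → ℕ) :
    ∑ i ∈ Finset.range (n + t), h i
      = (∑ i ∈ Finset.range t, h i) + ∑ a ∈ Finset.range n, h (t + a) := by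
  rw [show n + t = t + n from Nat.add_comm n t]
  rw [Finset.range_eq_Ico, ← Finset.sum_Ico_consecutive _ (Nat.zero_le t) (Nat.le_add_right t n)]
  congr 1
  · rw [Finset.range_eq_Ico]
  rw [Finset.sum_Ico_eq_sum_range]
  simp only [Nat.add_sub_cancel_left]

lemma FF_lt {n t k : ℕ} (f : ℕ → ℕ) {i : ℕ} (h : i < t) : FF n t k f i = k + i := by
  unfold FF; rw [if_pos h]

lemma FF_shift {n t k : ℕ} (f : ℕ → ℕ) (a : ℕ) : FF n t k f (t + a) = eM t k (f a) := by
  unfold FF; rw [if_neg (by omega)]; simp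

lemma invNum_prime {n t k : ℕ} (hk : k ≤ n) (g : Equiv.Perm (Fin n)) :
    invNum (primeMap n t k fun a => (g a : ℕ)) = t * k + invNum (fun a => (g a : ℕ)) := by
  rw [invNum_eq, invNum_eq]
  set G := pad n (fun a => (g a : ℕ)) with hG
  have congr1 : (∑ i ∈ Finset.range (n + t), ∑ j ∈ Finset.range (n + t),
        if i < j ∧ pad (n + t) (primeMap n t k fun a => (g a : ℕ)) j
          < pad (n + t) (primeMap n t k fun a => (g a : ℕ)) i then 1 else 0)
      = ∑ i ∈ Finset.range (n + t), ∑ j ∈ Finset.range (n + t),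
        if i < j ∧ FF n t k G j < FF n t k G i then 1 else 0 :=
    Finset.sum_congr rfl fun i hi => Finset.sum_congr rfl fun j hj => by
      rw [pad_prime t k _ i (Finset.mem_range.1 hi), pad_prime t k _ j (Finset.mem_range.1 hj)]
  rw [congr1, sum_split]
  have h1 : ∀ i ∈ Finset.range t,
      (∑ j ∈ Finset.range (n + t), if i < j ∧ FF n t k G j < FF n t k G i then 1 else 0)
        = k := by
    intro i hi
    have hit := Finset.mem_range.1 hi
    rw [sum_split]
    have hA : (∑ j ∈ Finset.range t,
        if i < j ∧ FF n t k G j < FF n t k G i then 1 else 0) = 0 := by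
      refine Finset.sum_eq_zero fun j hj => ?_
      rw [FF_lt G (Finset.mem_range.1 hj), FF_lt G hit]
      exact if_neg (by omega)
    have hB : (∑ b ∈ Finset.range n,
        if i < t + b ∧ FF n t k G (t + b) < FF n t k G i then 1 else 0) = k := by
      have step : ∀ b ∈ Finset.range n,
          (if i < t + b ∧ FF n t k G (t + b) < FF n t k G i then (1 : ℕ) else 0)
            = if G b < k then 1 else 0 := by
        intro b _
        rw [FF_shift, FF_lt G hit]
        have hiff : (i < t + b ∧ eM t k (G b) < k + i) ↔ G b < k := by
          unfold eM; split <;> omega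
        simp only [hiff]
      rw [Finset.sum_congr rfl step, hG]
      exact count_lt_k hk g
    rw [hA, hB]
    omega
  have h2 : ∀ a ∈ Finset.range n,
      (∑ j ∈ Finset.range (n + t), if t + a < j ∧ FF n t k G j < FF n t k G (t + a) then 1 else 0)
        = ∑ b ∈ Finset.range n, if a < b ∧ G b < G a then 1 else 0 := by
    intro a _
    rw [sum_split]
    have hC : (∑ j ∈ Finset.range t,
        if t + a < j ∧ FF n t k G j < FF n t k G (t + a) then 1 else 0) = 0 := by
      refine Finset.sum_eq_zero fun j hj => if_neg ?_
      rintro ⟨hj1, -⟩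
      have := Finset.mem_range.1 hj
      omega
    have hD : (∑ b ∈ Finset.range n,
        if t + a < t + b ∧ FF n t k G (t + b) < FF n t k G (t + a) then 1 else 0)
        = ∑ b ∈ Finset.range n, if a < b ∧ G b < G a then 1 else 0 := by
      refine Finset.sum_congr rfl fun b _ => ?_
      rw [FF_shift, FF_shift]
      have hiff : (t + a < t + b ∧ eM t k (G b) < eM t k (G a)) ↔ (a < b ∧ G b < G a) := by
        rw [eM_lt_iff]
        constructor <;> rintro ⟨u1, u2⟩ <;> exact ⟨by omega, u2⟩
      simp only [hiff]
    rw [hC, hD, Nat.zero_add]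
  rw [Finset.sum_congr rfl h1, Finset.sum_congr rfl h2]
  simp [Finset.sum_const, Finset.card_range, Nat.mul_comm]

/-- For `x ≤ y` in `S_n`, the set `Φ = {t+1, …, t+n}` is an interval pattern embedding of
`[x, y]` into `[x', y']`, where `x', y'` are given by equation (2.1): it is a common
pattern embedding, `x'` and `y'` agree outside `Φ`, `ℓ(y') - ℓ(x') = ℓ(y) - ℓ(x)`, and
`[x, y] ≅ [x', y']` as posets. -/
theorem primeMap_interval_pattern_embedding (n t k : ℕ) (ht : 1 ≤ t) (hk : k ≤ n)
    (x y : Equiv.Perm (Fin n)) (hxy : bruhatLE x y) :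
    (∀ i j : Fin n, i < j →
      (primeMap n t k (fun a => (x a : ℕ)) ⟨t + i, by have := i.isLt; omega⟩ <
          primeMap n t k (fun a => (x a : ℕ)) ⟨t + j, by have := j.isLt; omega⟩ ↔
        (x i : ℕ) < x j)) ∧
    (∀ i j : Fin n, i < j →
      (primeMap n t k (fun a => (y a : ℕ)) ⟨t + i, by have := i.isLt; omega⟩ <
          primeMap n t k (fun a => (y a : ℕ)) ⟨t + j, by have := j.isLt; omega⟩ ↔
        (y i : ℕ) < y j)) ∧
    (∀ i : Fin (n + t), (i : ℕ) < t →
      primeMap n t k (fun a => (x a : ℕ)) i = primeMap n t k (fun a => (y a : ℕ)) i) ∧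
    (invNum (primeMap n t k fun a => (y a : ℕ)) + invNum (fun a => (x a : ℕ)) =
      invNum (primeMap n t k fun a => (x a : ℕ)) + invNum (fun a => (y a : ℕ))) ∧
    ∃ x' y' : Equiv.Perm (Fin (n + t)),
      (∀ i, (x' i : ℕ) = primeMap n t k (fun a => (x a : ℕ)) i) ∧
      (∀ i, (y' i : ℕ) = primeMap n t k (fun a => (y a : ℕ)) i) ∧
      ∃ f : {z : Equiv.Perm (Fin n) // bruhatLE x z ∧ bruhatLE z y} ≃
          {z : Equiv.Perm (Fin (n + t)) // bruhatLE x' z ∧ bruhatLE z y'},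
        ∀ a b, bruhatLE a.1 b.1 ↔ bruhatLE (f a).1 (f b).1 := by
  have hmono : ∀ a b : Equiv.Perm (Fin n),
      bruhatLE a b ↔ bruhatLE (primePerm n t k hk a) (primePerm n t k hk b) :=
    fun a b => bruhat_transfer hk a b
  refine ⟨?_, ?_, ?_, ?_, ?_⟩
  · intro i j hij
    rw [primeMap_shift, primeMap_shift]
    exact eM_lt_iff
  · intro i j hij
    rw [primeMap_shift, primeMap_shift]
    exact eM_lt_iff
  · intro i hi
    rw [primeMap_lt_t _ i hi, primeMap_lt_t _ i hi]
  · rw [invNum_prime hk x, invNum_prime hk y]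
    omega
  · refine ⟨primePerm n t k hk x, primePerm n t k hk y,
      fun i => primePerm_apply hk x i, fun i => primePerm_apply hk y i, ?_⟩
    set F : {z : Equiv.Perm (Fin n) // bruhatLE x z ∧ bruhatLE z y} →
        {z : Equiv.Perm (Fin (n + t)) //
          bruhatLE (primePerm n t k hk x) z ∧ bruhatLE z (primePerm n t k hk y)} :=
      fun z => ⟨primePerm n t k hk z.1, (hmono x z.1).1 z.2.1, (hmono z.1 y).1 z.2.2⟩ with hF
    have hFinj : Function.Injective F := by
      intro a b hab
      apply Subtype.ext
      have heq : primePerm n t k hk a.1 = primePerm n t k hk b.1 := congrArg Subtype.val hab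
      apply Equiv.ext
      intro c
      have h2 : ((primePerm n t k hk a.1) ⟨t + (c : ℕ), by have := c.isLt; omega⟩ : ℕ)
          = ((primePerm n t k hk b.1) ⟨t + (c : ℕ), by have := c.isLt; omega⟩ : ℕ) := by
        rw [heq]
      rw [primePerm_apply, primePerm_apply, primeMap_shift, primeMap_shift] at h2
      exact Fin.ext (eM_inj h2)
    have hFsurj : Function.Surjective F := by
      rintro ⟨w, hw1, hw2⟩
      obtain ⟨z, hz, hxz, hzy⟩ := exists_preimage hk x y w hw1 hw2
      exact ⟨⟨z, hxz, hzy⟩, Subtype.ext hz⟩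
    refine ⟨Equiv.ofBijective F ⟨hFinj, hFsurj⟩, fun a b => ?_⟩
    exact hmono a.1 b.1
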